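/- Let 0 ≤ a < b, let α ∈ [0,1], m ∈ (0,1], s ∈ (0,1], let p > 1 and q = p/(p−1), and let f : ℝ → ℝ be differentiable on an open interval containing [a, b/m] with f' integrable on [a, b]. If |f'|^q is s-(α,m)-convex, i.e. for all x, y ∈ [a, b] and t ∈ [0,1], |f'(t·x + (1−t)·y)|^q ≤ t^{αs} |f'(x)|^q + m (1 − t^{αs}) |f'(y/m)|^q, then |(f(a)+f(b))/2 − (1/(b−a)) ∫_a^b f(x) dx| ≤ ((b−a) / (2 (p+1)^{1/p})) · [ ( |f'(a)|^q + m·αs·|f'(b/m)|^q ) / (αs + 1) ]^{1/q}. -/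

import Mathlib

open MeasureTheory

lemma pow_int_aux (a b r : ℝ) (hab : a < b) (hr : 0 ≤ r) :
    ∫ x in a..b, ((b - x) / (b - a)) ^ r = (b - a) / (r + 1) := by
  have hδ : (0:ℝ) < b - a := sub_pos.2 hab
  have h1 : (∫ x in a..b, ((b - x) / (b - a)) ^ r)
      = ∫ x in b - b..b - a, (x / (b - a)) ^ r :=
    intervalIntegral.integral_comp_sub_left (fun u => (u / (b - a)) ^ r) b
  rw [h1, sub_self,
    intervalIntegral.integral_comp_div (f := fun u => u ^ r) (c := b - a) hδ.ne',
    zero_div, div_self hδ.ne',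
    integral_rpow (Or.inl (by linarith : (-1:ℝ) < r))]
  rw [Real.one_rpow, Real.zero_rpow (by linarith : r + 1 ≠ 0), smul_eq_mul]
  field_simp
  norm_num

lemma ker_int_aux (a b p : ℝ) (hab : a < b) (hp : 0 < p) :
    ∫ x in a..b, |x - (a + b) / 2| ^ p = ((b - a) / 2) ^ p * ((b - a) / (p + 1)) := by
  have hδ : (0:ℝ) < b - a := sub_pos.2 hab
  set c := (a + b) / 2 with hc
  have hac : a ≤ c := by rw [hc]; linarith
  have hcb : c ≤ b := by rw [hc]; linarith
  have hcont : Continuous fun x : ℝ => |x - c| ^ p := by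
    apply Continuous.rpow_const (by continuity) fun x => Or.inr hp.le
  have hsplit : (∫ x in a..c, |x - c| ^ p) + (∫ x in c..b, |x - c| ^ p)
      = ∫ x in a..b, |x - c| ^ p :=
    intervalIntegral.integral_add_adjacent_intervals
      (hcont.intervalIntegrable a c) (hcont.intervalIntegrable c b)
  have hW : (0:ℝ) < (b - a) / 2 := by linarith
  have h1 : (∫ x in a..c, |x - c| ^ p) = ((b - a)/2) ^ (p + 1) / (p + 1) := by
    have e1 : (∫ x in a..c, |x - c| ^ p) = ∫ x in a..c, (c - x) ^ p := by
      apply intervalIntegral.integral_congr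
      intro x hx
      rw [Set.uIcc_of_le hac] at hx
      show |x - c| ^ p = (c - x) ^ p
      rw [abs_sub_comm, abs_of_nonneg (by linarith [hx.2])]
    rw [e1, intervalIntegral.integral_comp_sub_left (fun u => u ^ p) c, sub_self,
      show c - a = (b - a) / 2 by rw [hc]; ring,
      integral_rpow (Or.inl (by linarith : (-1:ℝ) < p)),
      Real.zero_rpow (by linarith : p + 1 ≠ 0)]
    ring
  have h2 : (∫ x in c..b, |x - c| ^ p) = ((b - a)/2) ^ (p + 1) / (p + 1) := by
    have e1 : (∫ x in c..b, |x - c| ^ p) = ∫ x in c..b, (x - c) ^ p := by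
      apply intervalIntegral.integral_congr
      intro x hx
      rw [Set.uIcc_of_le hcb] at hx
      show |x - c| ^ p = (x - c) ^ p
      rw [abs_of_nonneg (by linarith [hx.1])]
    rw [e1, intervalIntegral.integral_comp_sub_right (fun u => u ^ p) c, sub_self,
      show b - c = (b - a) / 2 by rw [hc]; ring,
      integral_rpow (Or.inl (by linarith : (-1:ℝ) < p)),
      Real.zero_rpow (by linarith : p + 1 ≠ 0)]
    ring
  have hWp : ((b - a)/2) ^ (p + 1) = ((b - a)/2) ^ p * ((b - a)/2) := by
    rw [Real.rpow_add hW, Real.rpow_one]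
  rw [← hsplit, h1, h2, hWp]
  field_simp
  ring


/-- Theorem 2: Hölder-type Hermite–Hadamard estimate for `|f'|^q` being
`s`-`(α,m)`-convex (first sense), `p > 1`, `q = p/(p-1)`. -/
theorem hh_s_alpha_m_convex_holder (f f' : ℝ → ℝ) (a b α m s p q c d : ℝ)
    (ha : 0 ≤ a) (hab : a < b)
    (hα : α ∈ Set.Icc (0:ℝ) 1) (hm : m ∈ Set.Ioc (0:ℝ) 1) (hs : s ∈ Set.Ioc (0:ℝ) 1)
    (hp : 1 < p) (hq : q = p / (p - 1))
    (hc : c < a) (hd : b / m < d)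
    (hdiff : ∀ x ∈ Set.Ioo c d, HasDerivAt f (f' x) x)
    (hint : IntervalIntegrable f' volume a b)
    (hconv : ∀ x ∈ Set.Icc a b, ∀ y ∈ Set.Icc a b, ∀ t ∈ Set.Icc (0:ℝ) 1,
      |f' (t * x + (1 - t) * y)| ^ q ≤
        t ^ (α * s) * |f' x| ^ q + m * (1 - t ^ (α * s)) * |f' (y / m)| ^ q) :
    |(f a + f b) / 2 - (1 / (b - a)) * ∫ x in a..b, f x| ≤
      ((b - a) / (2 * (p + 1) ^ (1 / p))) *
        ((|f' a| ^ q + m * (α * s) * |f' (b / m)| ^ q) / (α * s + 1)) ^ (1 / q) := by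
  obtain ⟨hα0, hα1⟩ := hα
  obtain ⟨hm0, hm1⟩ := hm
  obtain ⟨hs0, hs1⟩ := hs
  have hδ : (0:ℝ) < b - a := sub_pos.2 hab
  have hb0 : (0:ℝ) < b := lt_of_le_of_lt ha hab
  have hbm : b ≤ b / m := (le_div_iff₀ hm0).2 (by nlinarith)
  have hp0 : (0:ℝ) < p := by linarith
  have hpq : p.HolderConjugate q := hq ▸ Real.HolderConjugate.conjExponent hp
  have hq1 : 1 < q := hpq.symm.lt
  have hq0 : (0:ℝ) < q := by linarith
  set r := α * s with hrdef
  have hr0 : (0:ℝ) ≤ r := mul_nonneg hα0 hs0.le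
  set A := |f' a| ^ q with hA
  set B := |f' (b / m)| ^ q with hBdef
  have hA0 : (0:ℝ) ≤ A := Real.rpow_nonneg (abs_nonneg _) q
  have hB0 : (0:ℝ) ≤ B := Real.rpow_nonneg (abs_nonneg _) q
  set c₀ := (a + b) / 2 with hc₀
  -- Step A: integration by parts identity
  have hsub : Set.uIcc a b ⊆ Set.Ioo c d := by
    rw [Set.uIcc_of_le hab.le]
    intro x hx
    exact ⟨lt_of_lt_of_le hc hx.1, lt_of_le_of_lt (hx.2.trans hbm) hd⟩
  have key : ∫ x in a..b, (x - c₀) * f' x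
      = (b - a) / 2 * (f a + f b) - ∫ x in a..b, f x := by
    have h := intervalIntegral.integral_mul_deriv_eq_deriv_mul
      (u := fun x => x - c₀) (u' := fun _ => (1:ℝ)) (v := f) (v' := f')
      (fun x _ => (hasDerivAt_id x).sub_const c₀)
      (fun x hx => hdiff x (hsub hx))
      intervalIntegrable_const hint
    rw [h]
    simp only [one_mul]
    rw [hc₀]
    ring
  have hB2 : (f a + f b) / 2 - (1 / (b - a)) * ∫ x in a..b, f x
      = (1 / (b - a)) * ∫ x in a..b, (x - c₀) * f' x := by
    rw [key]
    field_simp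
  rw [hB2, abs_mul, abs_of_nonneg (by positivity : (0:ℝ) ≤ 1 / (b - a))]
  -- switch to set integral
  haveI : IsFiniteMeasure (volume.restrict (Set.Ioc a b)) :=
    ⟨by rw [Measure.restrict_apply_univ]; exact measure_Ioc_lt_top⟩
  rw [intervalIntegral.integral_of_le hab.le]
  set K := (A + m * r * B) / (r + 1) with hKdef
  have hK0 : (0:ℝ) ≤ K := by
    apply div_nonneg _ (by linarith)
    have : 0 ≤ m * r * B := by positivity
    linarith
  -- pointwise convexity bound
  have hptw : ∀ x ∈ Set.Ioc a b,
      |f' x| ^ q ≤ (A - m * B) * ((b - x) / (b - a)) ^ r + m * B := by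
    intro x hx
    have ht0 : (0:ℝ) ≤ (b - x) / (b - a) := div_nonneg (by linarith [hx.2]) hδ.le
    have ht1 : (b - x) / (b - a) ≤ 1 := (div_le_one hδ).2 (by linarith [hx.1])
    have h := hconv a ⟨le_refl a, hab.le⟩ b ⟨hab.le, le_refl b⟩
      ((b - x) / (b - a)) ⟨ht0, ht1⟩
    have harg : (b - x) / (b - a) * a + (1 - (b - x) / (b - a)) * b = x := by
      field_simp
      ring
    rw [harg] at h
    calc |f' x| ^ q ≤ ((b - x) / (b - a)) ^ r * A + m * (1 - ((b - x) / (b - a)) ^ r) * B := h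
      _ = (A - m * B) * ((b - x) / (b - a)) ^ r + m * B := by ring
  have htb : ∀ x ∈ Set.Ioc a b, ((b - x) / (b - a)) ^ r ≤ 1 := by
    intro x hx
    exact Real.rpow_le_one (div_nonneg (by linarith [hx.2]) hδ.le)
      ((div_le_one hδ).2 (by linarith [hx.1])) hr0
  have htnn : ∀ x ∈ Set.Ioc a b, (0:ℝ) ≤ ((b - x) / (b - a)) ^ r := by
    intro x hx
    exact Real.rpow_nonneg (div_nonneg (by linarith [hx.2]) hδ.le) r
  have hqbound : ∀ x ∈ Set.Ioc a b, |f' x| ^ q ≤ A + m * B := by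
    intro x hx
    have h1 := hptw x hx
    have h2 := htb x hx
    have h3 := htnn x hx
    nlinarith [mul_nonneg hm0.le hB0]
  -- measurability
  have hf'm : AEStronglyMeasurable f' (volume.restrict (Set.Ioc a b)) :=
    hint.1.aestronglyMeasurable
  have habsf' : AEStronglyMeasurable (fun x => |f' x|) (volume.restrict (Set.Ioc a b)) := by
    simpa [Real.norm_eq_abs] using hf'm.norm
  have hqm : AEStronglyMeasurable (fun x => |f' x| ^ q) (volume.restrict (Set.Ioc a b)) :=
    (Real.continuous_rpow_const hq0.le).comp_aestronglyMeasurable habsf'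
  -- |∫ (x-c₀) f'| ≤ ∫ |x-c₀| |f'|
  have habs : |∫ x in Set.Ioc a b, (x - c₀) * f' x|
      ≤ ∫ x in Set.Ioc a b, |x - c₀| * |f' x| := by
    have h := norm_integral_le_integral_norm (μ := volume.restrict (Set.Ioc a b))
      (fun x => (x - c₀) * f' x)
    simpa [Real.norm_eq_abs, abs_mul] using h
  -- Hölder
  have hmem1 : MemLp (fun x => |x - c₀|) (ENNReal.ofReal p)
      (volume.restrict (Set.Ioc a b)) := by
    have hcont1 : Continuous fun x : ℝ => |x - c₀| :=
      (continuous_id.sub continuous_const).abs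
    apply MemLp.of_bound hcont1.aestronglyMeasurable (b - a)
    filter_upwards [ae_restrict_mem measurableSet_Ioc] with x hx
    rw [Real.norm_eq_abs, abs_abs, abs_le, hc₀]
    constructor <;> [linarith [hx.1]; linarith [hx.2]]
  have hmem2 : MemLp (fun x => |f' x|) (ENNReal.ofReal q)
      (volume.restrict (Set.Ioc a b)) := by
    apply MemLp.of_bound habsf' ((A + m * B) ^ (1 / q))
    filter_upwards [ae_restrict_mem measurableSet_Ioc] with x hx
    rw [Real.norm_eq_abs, abs_abs]
    have h1 : |f' x| = (|f' x| ^ q) ^ (1 / q) := by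
      rw [← Real.rpow_mul (abs_nonneg _), mul_one_div, div_self hq0.ne', Real.rpow_one]
    rw [h1]
    exact Real.rpow_le_rpow (Real.rpow_nonneg (abs_nonneg _) q) (hqbound x hx) (by positivity)
  have hHolder := MeasureTheory.integral_mul_le_Lp_mul_Lq_of_nonneg hpq
    (Filter.Eventually.of_forall fun x => abs_nonneg (x - c₀))
    (Filter.Eventually.of_forall fun x => abs_nonneg (f' x)) hmem1 hmem2
  -- compute the momentum integral
  have hIp : ∫ x in Set.Ioc a b, |x - c₀| ^ p
      = ((b - a) / 2) ^ p * ((b - a) / (p + 1)) := by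
    rw [← intervalIntegral.integral_of_le hab.le, hc₀]
    exact ker_int_aux a b p hab hp0
  -- bound the |f'|^q integral
  have hgc : Continuous fun x : ℝ => (A - m * B) * ((b - x) / (b - a)) ^ r + m * B := by
    apply Continuous.add _ continuous_const
    apply Continuous.mul continuous_const
    exact Continuous.rpow_const ((continuous_const.sub continuous_id).div_const _)
      fun x => Or.inr hr0
  have hfq_int : IntegrableOn (fun x => |f' x| ^ q) (Set.Ioc a b) volume := by
    apply Integrable.mono' (integrable_const (A + m * B)) hqm
    filter_upwards [ae_restrict_mem measurableSet_Ioc] with x hx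
    rw [Real.norm_eq_abs, abs_of_nonneg (Real.rpow_nonneg (abs_nonneg _) q)]
    exact hqbound x hx
  have hIq : ∫ x in Set.Ioc a b, |f' x| ^ q ≤ (b - a) * K := by
    have hmono := setIntegral_mono_on hfq_int (hgc.integrableOn_Ioc) measurableSet_Ioc hptw
    refine hmono.trans (le_of_eq ?_)
    rw [← intervalIntegral.integral_of_le hab.le]
    have hhi : IntervalIntegrable (fun x => ((b - x) / (b - a)) ^ r) volume a b :=
      (Continuous.rpow_const ((continuous_const.sub continuous_id).div_const _)
        fun x => Or.inr hr0).intervalIntegrable a b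
    rw [intervalIntegral.integral_add ((hhi.const_mul _)) intervalIntegrable_const,
      intervalIntegral.integral_const_mul, pow_int_aux a b r hab hr0,
      intervalIntegral.integral_const, smul_eq_mul, hKdef]
    field_simp
    ring
  have hIq0 : (0:ℝ) ≤ ∫ x in Set.Ioc a b, |f' x| ^ q :=
    setIntegral_nonneg measurableSet_Ioc fun x _ => Real.rpow_nonneg (abs_nonneg _) q
  -- assemble
  have hP : (0:ℝ) < (p + 1) ^ (1 / p) := Real.rpow_pos_of_pos (by linarith) _
  calc (1 / (b - a)) * |∫ x in Set.Ioc a b, (x - c₀) * f' x|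
      ≤ (1 / (b - a)) * ((((b - a) / 2) ^ p * ((b - a) / (p + 1))) ^ (1 / p)
        * ((b - a) * K) ^ (1 / q)) := by
        apply mul_le_mul_of_nonneg_left _ (by positivity)
        refine habs.trans (hHolder.trans ?_)
        rw [hIp]
        gcongr
    _ = (b - a) / (2 * (p + 1) ^ (1 / p)) * K ^ (1 / q) := by
        rw [Real.mul_rpow (Real.rpow_nonneg (by positivity) p) (by positivity),
          ← Real.rpow_mul (by positivity : (0:ℝ) ≤ (b - a) / 2), mul_one_div,
          div_self hp0.ne', Real.rpow_one,
          Real.div_rpow hδ.le (by positivity : (0:ℝ) ≤ p + 1),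
          Real.mul_rpow hδ.le hK0]
        have hsum : (b - a) ^ (1 / p) * (b - a) ^ (1 / q) = b - a := by
          rw [← Real.rpow_add hδ, one_div, one_div, hpq.inv_add_inv_eq_one, Real.rpow_one]
        have h2 : (0:ℝ) < (b - a) ^ (1 / p) := Real.rpow_pos_of_pos hδ _
        have h3 : (0:ℝ) < (b - a) ^ (1 / q) := Real.rpow_pos_of_pos hδ _
        calc 1 / (b - a) * ((b - a) / 2 * ((b - a) ^ (1 / p) / (p + 1) ^ (1 / p))
              * ((b - a) ^ (1 / q) * K ^ (1 / q)))
            = ((b - a) ^ (1 / p) * (b - a) ^ (1 / q))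
              * (1 / (b - a) * ((b - a) / 2) * (1 / (p + 1) ^ (1 / p)) * K ^ (1 / q)) := by
              ring
          _ = (b - a) * (1 / (b - a) * ((b - a) / 2) * (1 / (p + 1) ^ (1 / p)) * K ^ (1 / q)) := by
              rw [hsum]
          _ = (b - a) / (2 * (p + 1) ^ (1 / p)) * K ^ (1 / q) := by
              field_simp
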